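/- With T, the T_k, d_t, δ_k, ℚ and the relations ≤_k as defined in the context: let ⟨q_k⟩_{k∈ℕ} be a sequence in ℚ such that q_{2k+2} ≤_{k+1} q_{2k+1} and q_{2k+1} ≤_k q_{2k} for every k ∈ ℕ. Then q̂ = ⋂_{k∈ℕ} q_k belongs to ℚ (and is accordingly a lower bound for {q_k : k ∈ ℕ} under inclusion); moreover q̂ ∩ T_{k+1} = q_{2k+1} ∩ T_{k+1} for each k ∈ ℕ. -/
import Mathlib


open Filter
open scoped Classical

/-- A node of the tree: a rank `k` together with a tuple `⟨C_i⟩_{i<k}` with `C_i ⊆ n_i`. -/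
abbrev NodeT (n : ℕ → ℕ) : Type :=
  Σ k : ℕ, ∀ i : Fin k, Finset (Fin (n i))

/-- The tree order: `t ≤ t'` iff `rank t ≤ rank t'` and `C_i(t) = C_i(t')` for `i < rank t`. -/
def nodeLE {n : ℕ → ℕ} (t t' : NodeT n) : Prop :=
  ∃ h : t.1 ≤ t'.1, ∀ i : Fin t.1, t.2 i = t'.2 (Fin.castLE h i)

/-- The tree `T`: the nodes `t` of rank `k` with `#(C_i(t)) ≥ (1 - 2^{-i-1})·n_i` for `i < k`;
`T_k` is the set of such nodes of rank `k`. -/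
def TreeT (n : ℕ → ℕ) : Set (NodeT n) :=
  {t | ∀ i : Fin t.1, (1 - (2 : ℝ)⁻¹ ^ ((i : ℕ) + 1)) * n i ≤ ((t.2 i).card : ℝ)}

/-- `t × C`: the extension of a node `t` of rank `k` by a further coordinate `C ⊆ n_k`. -/
def extendNode {n : ℕ → ℕ} (t : NodeT n) (C : Finset (Fin (n t.1))) : NodeT n :=
  ⟨t.1 + 1, Fin.snoc (α := fun i : Fin (t.1 + 1) => Finset (Fin (n i))) t.2 C⟩

/-- For a family `𝒜` of (finite) sets, `dp 𝒜` is the least cardinality of a finite set meeting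
every member of `𝒜`. -/
noncomputable def dp {β : Type*} (𝒜 : Set (Finset β)) : ℕ :=
  sInf {m | ∃ I : Finset β, I.card = m ∧ ∀ A ∈ 𝒜, ∃ a ∈ I, a ∈ A}

/-- `γ_k = (k+1)/ln ⌈2^{-k-1} n_k⌉`. -/
noncomputable def gam (n : ℕ → ℕ) (k : ℕ) : ℝ :=
  ((k : ℝ) + 1) / Real.log (⌈(2 : ℝ)⁻¹ ^ (k + 1) * n k⌉₊ : ℝ)

/-- `d_t(S) = γ_{rank t} · ln (dp {C : t × C ∈ S})`, with value `-∞` if no member of `S` is of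
the form `t × C`. -/
noncomputable def dt {n : ℕ → ℕ} (t : NodeT n) (S : Set (NodeT n)) : EReal :=
  if {C : Finset (Fin (n t.1)) | extendNode t C ∈ S} = ∅ then ⊥
  else ((gam n t.1 * Real.log (dp {C : Finset (Fin (n t.1)) | extendNode t C ∈ S}) : ℝ) : EReal)

/-- `δ_k(q) = min { d_t(q) : t ∈ q ∩ T_k }`. -/
noncomputable def deltaQ {n : ℕ → ℕ} (k : ℕ) (q : Set (NodeT n)) : EReal :=
  sInf {x : EReal | ∃ t ∈ q, t.1 = k ∧ x = dt t q}

/-- The p.o.set `ℚ`: nonempty downward-closed subtrees `q ⊆ T`, every node of which has a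
successor in `q`, with `lim_{k→∞} δ_k(q) = ∞`. -/
def QQ (n : ℕ → ℕ) : Set (Set (NodeT n)) :=
  {q | q ⊆ TreeT n ∧ q.Nonempty ∧
    (∀ t t' : NodeT n, nodeLE t t' → t' ∈ q → t ∈ q) ∧
    (∀ t ∈ q, ∃ t' ∈ q, nodeLE t t' ∧ t'.1 = t.1 + 1) ∧
    Tendsto (fun k => deltaQ k q) atTop (nhds (⊤ : EReal))}

/-- `q ≤_k q'` iff `q ⊆ q'`, `q ∩ T_k = q' ∩ T_k`, and
`d_t(q) ≥ min(k, d_t(q')) - 2^{-k}` for every `t ∈ q`. -/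
def lek (n : ℕ → ℕ) (k : ℕ) (q q' : Set (NodeT n)) : Prop :=
  q ⊆ q' ∧ {t ∈ q | t.1 = k} = {t ∈ q' | t.1 = k} ∧
    ∀ t ∈ q, min ((k : ℝ) : EReal) (dt t q') - (((2 : ℝ)⁻¹ ^ k : ℝ) : EReal) ≤ dt t q

lemma nodeLE_refl' {n : ℕ → ℕ} (t : NodeT n) : nodeLE t t := ⟨le_rfl, fun _ => rfl⟩

lemma nodeLE_trans' {n : ℕ → ℕ} {t s u : NodeT n} (h1 : nodeLE t s) (h2 : nodeLE s u) :
    nodeLE t u := by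
  obtain ⟨h, H⟩ := h1; obtain ⟨h', H'⟩ := h2
  exact ⟨h.trans h', fun i => by rw [H i, H' (Fin.castLE h i)]; rfl⟩

lemma ereal_sub_sub (x : EReal) (a b : ℝ) :
    x - (a:EReal) - (b:EReal) = x - (((a+b) : ℝ):EReal) := by
  rw [sub_eq_add_neg, sub_eq_add_neg, sub_eq_add_neg, add_assoc, ← EReal.coe_neg,
    ← EReal.coe_neg, ← EReal.coe_neg, ← EReal.coe_add]
  ring_nf

lemma ereal_sub_le_sub' {x y : EReal} (h : x ≤ y) (r : ℝ) : x - (r:EReal) ≤ y - (r:EReal) :=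
  EReal.sub_le_sub h le_rfl

lemma ereal_sub_le_sub_left' (x : EReal) {a b : ℝ} (h : a ≤ b) :
    x - (b:EReal) ≤ x - (a:EReal) :=
  EReal.sub_le_sub le_rfl (EReal.coe_le_coe_iff.mpr h)

lemma ereal_sub_le_self' (x : EReal) {r : ℝ} (h : 0 ≤ r) : x - (r:EReal) ≤ x := by
  calc x - (r:EReal) ≤ x - ((0:ℝ):EReal) := ereal_sub_le_sub_left' x h
  _ = x := by simp

lemma stmt5_exists_level {n : ℕ → ℕ} {A : Set (NodeT n)} (hA : A ∈ QQ n) :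
    ∀ t ∈ A, ∀ d, ∃ s ∈ A, nodeLE t s ∧ s.1 = t.1 + d := by
  intro t ht d
  induction d with
  | zero => exact ⟨t, ht, nodeLE_refl' t, rfl⟩
  | succ d ih =>
    obtain ⟨s, hs, hts, hrank⟩ := ih
    obtain ⟨s', hs', hss', hrank'⟩ := hA.2.2.2.1 s hs
    exact ⟨s', hs', nodeLE_trans' hts hss', by omega⟩

lemma stmt5_level_down {n : ℕ → ℕ} {A B : Set (NodeT n)} (hA : A ∈ QQ n) (hB : B ∈ QQ n)
    (hsub : A ⊆ B) {j : ℕ}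
    (hj : {t ∈ A | t.1 = j} = {t ∈ B | t.1 = j}) {i : ℕ} (hij : i ≤ j) :
    {t ∈ A | t.1 = i} = {t ∈ B | t.1 = i} := by
  ext t
  simp only [Set.mem_setOf_eq]
  constructor
  · rintro ⟨h, h'⟩; exact ⟨hsub h, h'⟩
  · rintro ⟨htB, hti⟩
    obtain ⟨s, hsB, hts, hrank⟩ := stmt5_exists_level hB t htB (j - i)
    have hsj : s ∈ {t ∈ B | t.1 = j} := ⟨hsB, by omega⟩
    rw [← hj] at hsj
    exact ⟨hA.2.2.1 t s hts hsj.1, hti⟩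

/-- **Lemma 1H.** If `⟨q_k⟩` is a sequence in `ℚ` with `q_{2k+2} ≤_{k+1} q_{2k+1} ≤_k q_{2k}`
for every `k`, then `q̂ = ⋂_k q_k` belongs to `ℚ` (so is a lower bound for `{q_k}` in `ℚ`), and
`q̂ ∩ T_{k+1} = q_{2k+1} ∩ T_{k+1}` for every `k`. -/
theorem stmt_5 (n : ℕ → ℕ) (hn : ∀ k, 2 ^ (k + 1) < n k)
    (q : ℕ → Set (NodeT n)) (hq : ∀ k, q k ∈ QQ n)
    (h1 : ∀ k, lek n (k + 1) (q (2 * k + 2)) (q (2 * k + 1)))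
    (h2 : ∀ k, lek n k (q (2 * k + 1)) (q (2 * k))) :
    (⋂ k, q k) ∈ QQ n ∧
      ∀ k, {t ∈ ⋂ k', q k' | t.1 = k + 1} = {t ∈ q (2 * k + 1) | t.1 = k + 1} := by
  -- one-step inclusion
  have hsub1 : ∀ m, q (m+1) ⊆ q m := by
    intro m
    rcases Nat.even_or_odd m with ⟨k, hk⟩ | ⟨k, hk⟩
    · have e : m = 2*k := by omega
      subst e; exact (h2 k).1
    · have e : m = 2*k+1 := by omega
      subst e; exact (h1 k).1
  have hmono : ∀ {a b : ℕ}, a ≤ b → q b ⊆ q a := by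
    intro a b hab
    obtain ⟨c, rfl⟩ := Nat.exists_eq_add_of_le hab
    clear hab
    induction c with
    | zero => exact subset_rfl
    | succ c ih => exact (hsub1 (a+c)).trans ih
  -- level stability along the sequence
  have hlev : ∀ k d, {t ∈ q (2*k+1+d) | t.1 = k+1} = {t ∈ q (2*k+1) | t.1 = k+1} := by
    intro k d
    induction d with
    | zero => rfl
    | succ d ih =>
      refine Eq.trans ?_ ih
      rcases Nat.even_or_odd (2*k+1+d) with ⟨k', hk'⟩ | ⟨k', hk'⟩
      · have e1 : 2*k+1+(d+1) = 2*k'+1 := by omega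
        have e2 : 2*k+1+d = 2*k' := by omega
        rw [e1, e2]
        exact stmt5_level_down (hq _) (hq _) (h2 k').1 (h2 k').2.1 (by omega : k+1 ≤ k')
      · have e1 : 2*k+1+(d+1) = 2*k'+2 := by omega
        have e2 : 2*k+1+d = 2*k'+1 := by omega
        rw [e1, e2]
        exact stmt5_level_down (hq _) (hq _) (h1 k').1 (h1 k').2.1 (by omega : k+1 ≤ k'+1)
  -- levels of the intersection
  have hhat : ∀ k, {t ∈ ⋂ k', q k' | t.1 = k+1} = {t ∈ q (2*k+1) | t.1 = k+1} := by
    intro k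
    ext t
    simp only [Set.mem_setOf_eq, Set.mem_iInter]
    constructor
    · rintro ⟨hA, h⟩; exact ⟨hA (2*k+1), h⟩
    · rintro ⟨hA, h⟩
      refine ⟨fun m => ?_, h⟩
      rcases le_or_gt m (2*k+1) with hm | hm
      · exact hmono hm hA
      · obtain ⟨d, rfl⟩ : ∃ d, m = 2*k+1+d := ⟨m - (2*k+1), by omega⟩
        have ht : t ∈ {t ∈ q (2*k+1+d) | t.1 = k+1} := by rw [hlev k d]; exact ⟨hA, h⟩
        exact ht.1
  -- dt on the intersection
  have hdt : ∀ (t : NodeT n) (k : ℕ), t.1 = k → dt t (⋂ k', q k') = dt t (q (2*k+1)) := by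
    intro t k hk
    have hC : {C : Finset (Fin (n t.1)) | extendNode t C ∈ (⋂ k', q k')}
        = {C : Finset (Fin (n t.1)) | extendNode t C ∈ q (2*k+1)} := by
      ext C
      have hrank : (extendNode t C).1 = k+1 := by simp [extendNode, hk]
      simp only [Set.mem_setOf_eq]
      constructor
      · intro h
        have hmem : extendNode t C ∈ {t ∈ q (2*k+1) | t.1 = k+1} := by
          rw [← hhat k]; exact ⟨h, hrank⟩
        exact hmem.1
      · intro h
        have hmem : extendNode t C ∈ {t ∈ (⋂ k', q k') | t.1 = k+1} := by
          rw [hhat k]; exact ⟨h, hrank⟩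
        exact hmem.1
    simp only [dt, hC]
  -- the fusion chain estimate
  have hchain : ∀ j d, ∀ t ∈ q (2*(j+d)+1),
      min ((j:ℝ):EReal) (dt t (q (2*j))) - (((4 - 2*(2:ℝ)⁻¹^(j+d)) : ℝ) : EReal)
        ≤ dt t (q (2*(j+d)+1)) := by
    intro j d
    induction d with
    | zero =>
      intro t ht
      simp only [Nat.add_zero] at ht ⊢
      have hstep := (h2 j).2.2 t ht
      refine le_trans ?_ hstep
      refine ereal_sub_le_sub_left' _ ?_
      have hp : (2:ℝ)⁻¹^j ≤ 1 := pow_le_one₀ (by norm_num) (by norm_num)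
      linarith
    | succ d ih =>
      intro t ht
      have enat : j + (d+1) = j + d + 1 := by omega
      rw [enat] at ht ⊢
      have e2 : 2*(j+d+1) = 2*(j+d)+2 := by omega
      rw [e2] at ht ⊢
      have ht2 : t ∈ q (2*(j+d)+2) := hsub1 _ ht
      have ht1 : t ∈ q (2*(j+d)+1) := hsub1 _ ht2
      have hih := ih t ht1
      have hA := (h1 (j+d)).2.2 t ht2
      have hB := (h2 (j+d+1)).2.2 t (by rw [e2]; exact ht)
      rw [e2] at hB
      -- abbreviations
      set M : EReal := min ((j:ℝ):EReal) (dt t (q (2*j))) with hM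
      have ha0 : (0:ℝ) ≤ 4 - 2*(2:ℝ)⁻¹^(j+d) := by
        have hp : (2:ℝ)⁻¹^(j+d) ≤ 1 := pow_le_one₀ (by norm_num) (by norm_num)
        linarith
      have hMj : M ≤ ((j:ℝ):EReal) := min_le_left _ _
      have hjle : ((j:ℝ):EReal) ≤ (((j+d+1 : ℕ):ℝ):EReal) := by
        refine EReal.coe_le_coe_iff.mpr ?_
        exact_mod_cast (by omega : j ≤ j+d+1)
      have step1 : M - (((4 - 2*(2:ℝ)⁻¹^(j+d)) : ℝ) : EReal) ≤ (((j+d+1 : ℕ):ℝ):EReal) :=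
        le_trans (le_trans (ereal_sub_le_self' M ha0) hMj) hjle
      have key1 := le_min step1 hih
      have mid : M - (((4 - 2*(2:ℝ)⁻¹^(j+d)) : ℝ) : EReal) - (((2:ℝ)⁻¹^(j+d+1) : ℝ) : EReal)
          ≤ dt t (q (2*(j+d)+2)) :=
        le_trans (ereal_sub_le_sub' key1 _) hA
      have step2 : M - (((4 - 2*(2:ℝ)⁻¹^(j+d)) : ℝ) : EReal) - (((2:ℝ)⁻¹^(j+d+1) : ℝ) : EReal)
          ≤ (((j+d+1 : ℕ):ℝ):EReal) := by
        refine le_trans (ereal_sub_le_self' _ ?_) step1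
        positivity
      have key2 := le_min step2 mid
      have final := le_trans (ereal_sub_le_sub' key2 ((2:ℝ)⁻¹^(j+d+1))) hB
      refine le_trans (le_of_eq ?_) final
      rw [ereal_sub_sub, ereal_sub_sub]
      congr 1
      rw [EReal.coe_eq_coe_iff]
      rw [pow_succ]
      ring
  -- now assemble
  refine ⟨⟨?_, ?_, ?_, ?_, ?_⟩, hhat⟩
  · intro t ht
    exact (hq 0).1 (Set.mem_iInter.mp ht 0)
  · refine ⟨⟨0, fun i => i.elim0⟩, Set.mem_iInter.mpr fun m => ?_⟩
    obtain ⟨t, ht⟩ := (hq m).2.1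
    exact (hq m).2.2.1 _ t ⟨Nat.zero_le _, fun i => i.elim0⟩ ht
  · intro t t' hle ht'
    exact Set.mem_iInter.mpr fun m => (hq m).2.2.1 t t' hle (Set.mem_iInter.mp ht' m)
  · intro t ht
    obtain ⟨t', ht', hle, hrank⟩ := (hq (2*t.1+1)).2.2.2.1 t (Set.mem_iInter.mp ht (2*t.1+1))
    refine ⟨t', ?_, hle, hrank⟩
    have hmem : t' ∈ {s ∈ q (2*t.1+1) | s.1 = t.1+1} := ⟨ht', hrank⟩
    rw [← hhat t.1] at hmem
    exact hmem.1
  · rw [EReal.tendsto_nhds_top_iff_real]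
    intro x
    obtain ⟨j, hj⟩ := exists_nat_gt (x + 4)
    have htd := EReal.tendsto_nhds_top_iff_real.mp (hq (2*j)).2.2.2.2 (j:ℝ)
    filter_upwards [htd, eventually_ge_atTop j] with k hk1 hk2
    obtain ⟨d, rfl⟩ : ∃ d, k = j + d := ⟨k - j, by omega⟩
    show ((x:ℝ):EReal) < deltaQ (j+d) (⋂ k', q k')
    have hlb : (((((j:ℝ) - 4) : ℝ)):EReal) ≤ deltaQ (j+d) (⋂ k', q k') := by
      rw [deltaQ]
      refine le_sInf ?_
      rintro y ⟨t, htQ, hrank, rfl⟩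
      rw [hdt t (j+d) hrank]
      have htq := Set.mem_iInter.mp htQ
      have hch := hchain j d t (htq (2*(j+d)+1))
      refine le_trans ?_ hch
      have hdtj : ((j:ℝ):EReal) ≤ dt t (q (2*j)) := by
        refine le_trans hk1.le ?_
        rw [deltaQ]
        exact sInf_le ⟨t, htq (2*j), hrank, rfl⟩
      rw [min_eq_left hdtj, ← EReal.coe_sub]
      refine EReal.coe_le_coe_iff.mpr ?_
      have hp : (0:ℝ) ≤ (2:ℝ)⁻¹^(j+d) := by positivity
      linarith
    refine lt_of_lt_of_le ?_ hlb
    exact EReal.coe_lt_coe_iff.mpr (by linarith)
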